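/- Let r>0, ρ>0, δ>0, γ>0 with γ≠1, x_α > −1/ρ, and set x₀ := (r+ρ−δ)/(δρ). Let v be twice differentiable on (x_α,∞) with v'(x) > 0, satisfying −(r+ρ)x·v'(x) + δ·v(x) = (γ/(1−γ))·((1+ρx)v'(x))^{1−1/γ} for all x > x_α, and define c*(x) := ((1+ρx)v'(x))^{−1/γ}. Then c* satisfies, for all x > x_α, (c*(x) − (r+ρ)x/(1+ρx))·c*'(x) = (δρ/γ)·((x − x₀)/(1+ρx)²)·c*(x). -/

import Mathlib

open Topology

/-- derivation of the ODE for the optimal consumption feedback: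
if `v` is twice differentiable with `v' > 0` and solves the HJB equation above the
free boundary, then `c*(x) = ((1+ρx)v'(x))^{-1/γ}` satisfies
`(c*(x) - (r+ρ)x/(1+ρx)) c*'(x) = (δρ/γ)((x-x₀)/(1+ρx)²) c*(x)`. -/
theorem cstar_ode (r ρ δ γ xα : ℝ)
    (hr : 0 < r) (hρ : 0 < ρ) (hδ : 0 < δ) (hγ : 0 < γ) (hγ1 : γ ≠ 1)
    (hxα : -(1 / ρ) < xα)
    (v : ℝ → ℝ)
    (hv_diff : ∀ x ∈ Set.Ioi xα, DifferentiableAt ℝ v x)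
    (hv_diff2 : ∀ x ∈ Set.Ioi xα, DifferentiableAt ℝ (deriv v) x)
    (hv_pos : ∀ x ∈ Set.Ioi xα, 0 < deriv v x)
    (hODE : ∀ x ∈ Set.Ioi xα,
      -(r + ρ) * x * deriv v x + δ * v x
        = γ / (1 - γ) * ((1 + ρ * x) * deriv v x) ^ (1 - 1 / γ)) :
    ∀ x ∈ Set.Ioi xα,
      (((1 + ρ * x) * deriv v x) ^ (-(1 / γ)) - (r + ρ) * x / (1 + ρ * x)) *
          deriv (fun s => ((1 + ρ * s) * deriv v s) ^ (-(1 / γ))) x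
        = δ * ρ / γ * ((x - (r + ρ - δ) / (δ * ρ)) / (1 + ρ * x) ^ 2) *
          ((1 + ρ * x) * deriv v x) ^ (-(1 / γ)) := by
  intro x hx
  have hx' : xα < x := hx
  have hA : 0 < 1 + ρ * x := by
    have h1 : 0 < ρ * (x + 1 / ρ) := mul_pos hρ (by linarith)
    have h2 : ρ * (1 / ρ) = 1 := by field_simp
    nlinarith
  set p := deriv v x with hp
  set p2 := deriv (deriv v) x with hp2
  have hppos : 0 < p := hv_pos x hx
  have hqpos : 0 < (1 + ρ * x) * p := mul_pos hA hppos
  set q : ℝ := (1 + ρ * x) * p with hqdef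
  set q' : ℝ := ρ * p + (1 + ρ * x) * p2 with hq'def
  -- derivative of g s = (1+ρs) * deriv v s
  have h2 : HasDerivAt (deriv v) p2 x := (hv_diff2 x hx).hasDerivAt
  have h1 : HasDerivAt (fun s => 1 + ρ * s) ρ x := by
    simpa using ((hasDerivAt_id x).const_mul ρ).const_add 1
  have hg : HasDerivAt (fun s => (1 + ρ * s) * deriv v s) q' x := by
    have := h1.fun_mul h2
    simpa [hq'def, mul_comm] using this
  -- derivative of c*
  have hc : HasDerivAt (fun s => ((1 + ρ * s) * deriv v s) ^ (-(1 / γ)))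
      (q' * (-(1 / γ)) * q ^ (-(1 / γ) - 1)) x :=
    hg.rpow_const (Or.inl hqpos.ne')
  -- derivative of LHS of HJB
  have hL : HasDerivAt (fun s => -(r + ρ) * s * deriv v s + δ * v s)
      (-(r + ρ) * (p + x * p2) + δ * p) x := by
    have hL1 : HasDerivAt (fun s => s * deriv v s) (p + x * p2) x := by
      simpa using (hasDerivAt_id' x).fun_mul h2
    have := (hL1.const_mul (-(r + ρ))).fun_add ((hv_diff x hx).hasDerivAt.const_mul δ)
    simpa [mul_assoc] using this
  -- derivative of RHS of HJB
  have hR : HasDerivAt (fun s => γ / (1 - γ) * ((1 + ρ * s) * deriv v s) ^ (1 - 1 / γ))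
      (γ / (1 - γ) * (q' * (1 - 1 / γ) * q ^ (1 - 1 / γ - 1))) x :=
    (hg.rpow_const (Or.inl hqpos.ne')).const_mul _
  have hEq : (fun s => -(r + ρ) * s * deriv v s + δ * v s)
      =ᶠ[𝓝 x] (fun s => γ / (1 - γ) * ((1 + ρ * s) * deriv v s) ^ (1 - 1 / γ)) := by
    filter_upwards [isOpen_Ioi.mem_nhds hx] with s hs using hODE s hs
  have key0 : -(r + ρ) * (p + x * p2) + δ * p
      = γ / (1 - γ) * (q' * (1 - 1 / γ) * q ^ (1 - 1 / γ - 1)) :=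
    (hL.congr_of_eventuallyEq hEq.symm).unique hR
  -- simplify key0
  have hγ0 : γ ≠ 0 := hγ.ne'
  have hγ1' : (1 : ℝ) - γ ≠ 0 := sub_ne_zero.mpr (Ne.symm hγ1)
  have hexp : 1 - 1 / γ - 1 = -(1 / γ) := by ring
  have hcoef : γ / (1 - γ) * (1 - 1 / γ) = -1 := by field_simp; ring
  set c : ℝ := q ^ (-(1 / γ)) with hcdef
  have key : c * q' = (r + ρ - δ) * p + (r + ρ) * x * p2 := by
    rw [hexp] at key0
    have : -(r + ρ) * (p + x * p2) + δ * p = -(c * q') := by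
      rw [key0, hcdef]; field_simp; ring
    linarith
  have hcpos : 0 < c := Real.rpow_pos_of_pos hqpos _
  have hq1 : q ^ (-(1 / γ) - 1) = c / q := by
    rw [hcdef, Real.rpow_sub hqpos, Real.rpow_one]
  rw [hc.deriv, hq1]
  -- now pure algebra
  rw [hq'def] at key
  have main : ((1 + ρ * x) * c - (r + ρ) * x) * (ρ * p + (1 + ρ * x) * p2)
      = ((r + ρ - δ) - δ * ρ * x) * p := by
    linear_combination (1 + ρ * x) * key
  rw [hq'def, hqdef]
  have hAne : (1 + ρ * x) ≠ 0 := hA.ne'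
  have hpne : p ≠ 0 := hppos.ne'
  have step : (c - (r + ρ) * x / (1 + ρ * x)) *
        ((ρ * p + (1 + ρ * x) * p2) * -(1 / γ) * (c / ((1 + ρ * x) * p)))
      = -(c / (γ * (1 + ρ * x) ^ 2 * p)) *
        (((1 + ρ * x) * c - (r + ρ) * x) * (ρ * p + (1 + ρ * x) * p2)) := by
    field_simp
  rw [step, main]
  field_simp
  ring
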